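/- arXiv:1610.02175 — 2 statements merged into one kernel-verified Lean document; each statement's English description precedes it below -/
import Mathlib

section
/- Let G be a finite simple graph with n vertices and m edges. The F-coindex of the subdivision graph satisfies F̄(S(G)) = (m+n-1)·M₁(G) - F(G) + 4m(m+n-3). -/
open SimpleGraph Finset
open scoped Classical

noncomputable section
namespace Paper

variable {V : Type*} [Fintype V]

/-- Degree as an integer. -/
def d (G : SimpleGraph V) (v : V) : ℤ := G.degree v

/-- Number of edges. -/
def m (G : SimpleGraph V) : ℤ := G.edgeFinset.card

/-- Sum over unordered edges of a symmetric vertex-pair function. -/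
def edgeSum (G : SimpleGraph V) (f : V → V → ℤ) (hf : ∀ u v, f u v = f v u) : ℤ :=
  ∑ e ∈ G.edgeFinset, Sym2.lift ⟨f, hf⟩ e

/-- First Zagreb index. -/
def M1 (G : SimpleGraph V) : ℤ := ∑ v, d G v ^ 2

/-- Second Zagreb index. -/
def M2 (G : SimpleGraph V) : ℤ :=
  edgeSum G (fun u v => d G u * d G v) (by intros; ring)

/-- F-index. -/
def F (G : SimpleGraph V) : ℤ := ∑ v, d G v ^ 3

/-- ξ₄. -/
def xi4 (G : SimpleGraph V) : ℤ := ∑ v, d G v ^ 4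

/-- Redefined third Zagreb index. -/
def ReZG3 (G : SimpleGraph V) : ℤ :=
  edgeSum G (fun u v => d G u * d G v * (d G u + d G v)) (by intros; ring)

/-- F-coindex: sum over edges of the complement with degrees in G. -/
def Fbar (G : SimpleGraph V) : ℤ :=
  edgeSum Gᶜ (fun u v => d G u ^ 2 + d G v ^ 2) (by intros; ring)

/-- Subdivision graph. -/
def subdivision (G : SimpleGraph V) : SimpleGraph (V ⊕ G.edgeSet) where
  Adj x y :=
    match x, y with
    | Sum.inl u, Sum.inr e => u ∈ (e : Sym2 V)
    | Sum.inr e, Sum.inl u => u ∈ (e : Sym2 V)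
    | _, _ => False
  symm := ⟨by rintro (u | e) (v | f) h <;> first | exact h | exact h.elim⟩
  loopless := ⟨by rintro (u | e) <;> simp⟩

/-- Vertex-semitotal graph. -/
def vertexSemitotal (G : SimpleGraph V) : SimpleGraph (V ⊕ G.edgeSet) where
  Adj x y :=
    match x, y with
    | Sum.inl u, Sum.inl v => G.Adj u v
    | Sum.inl u, Sum.inr e => u ∈ (e : Sym2 V)
    | Sum.inr e, Sum.inl u => u ∈ (e : Sym2 V)
    | _, _ => False
  symm := by
    constructor
    rintro (u | e) (v | f) h
    · exact G.adj_symm h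
    · exact h
    · exact h
    · exact h.elim
  loopless := by
    constructor
    rintro (u | e) h
    · exact G.loopless.irrefl u h
    · exact h

/-- Edge-semitotal graph. -/
def edgeSemitotal (G : SimpleGraph V) : SimpleGraph (V ⊕ G.edgeSet) where
  Adj x y :=
    match x, y with
    | Sum.inl u, Sum.inr e => u ∈ (e : Sym2 V)
    | Sum.inr e, Sum.inl u => u ∈ (e : Sym2 V)
    | Sum.inr e, Sum.inr f => e ≠ f ∧ ∃ v, v ∈ (e : Sym2 V) ∧ v ∈ (f : Sym2 V)
    | _, _ => False
  symm := by
    constructor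
    rintro (u | e) (v | f) h
    · exact h.elim
    · exact h
    · exact h
    · obtain ⟨hne, w, h1, h2⟩ := h
      exact ⟨hne.symm, w, h2, h1⟩
  loopless := by
    constructor
    rintro (u | e) h
    · exact h
    · exact h.1 rfl

/-- Total graph. -/
def total (G : SimpleGraph V) : SimpleGraph (V ⊕ G.edgeSet) where
  Adj x y :=
    match x, y with
    | Sum.inl u, Sum.inl v => G.Adj u v
    | Sum.inl u, Sum.inr e => u ∈ (e : Sym2 V)
    | Sum.inr e, Sum.inl u => u ∈ (e : Sym2 V)
    | Sum.inr e, Sum.inr f => e ≠ f ∧ ∃ v, v ∈ (e : Sym2 V) ∧ v ∈ (f : Sym2 V)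
  symm := by
    constructor
    rintro (u | e) (v | f) h
    · exact G.adj_symm h
    · exact h
    · exact h
    · obtain ⟨hne, w, h1, h2⟩ := h
      exact ⟨hne.symm, w, h2, h1⟩
  loopless := by
    constructor
    rintro (u | e) h
    · exact G.loopless.irrefl u h
    · exact h.1 rfl

/-- Paraline graph: line graph of the subdivision graph. -/
def paraline (G : SimpleGraph V) : SimpleGraph (subdivision G).edgeSet :=
  (subdivision G).lineGraph



lemma edgeSum_add' (H : SimpleGraph V) (f : V → ℤ) (hf : ∀ u v : V, f u + f v = f v + f u) :
    ∑ e ∈ H.edgeFinset, Sym2.lift ⟨fun u v => f u + f v, hf⟩ e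
      = ∑ v, f v * (H.degree v : ℤ) := by
  have h1 : ∀ e ∈ H.edgeFinset, Sym2.lift ⟨fun u v => f u + f v, hf⟩ e
      = ∑ v, if v ∈ e then f v else 0 := by
    intro e he
    induction e with
    | _ u w =>
      have hne : u ≠ w := (H.not_isDiag_of_mem_edgeSet (mem_edgeFinset.mp he))
      have hfil : Finset.univ.filter (· ∈ (s(u, w) : Sym2 V)) = {u, w} := by
        ext x; simp [Sym2.mem_iff]
      rw [← Finset.sum_filter, hfil, Finset.sum_pair hne, Sym2.lift_mk]
  rw [Finset.sum_congr rfl h1, Finset.sum_comm]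
  refine Finset.sum_congr rfl fun v _ => ?_
  rw [← Finset.sum_filter, Finset.sum_const, ← incidenceFinset_eq_filter,
    card_incidenceFinset_eq_degree]
  simp [mul_comm]

lemma Fbar_eq (H : SimpleGraph V) :
    Fbar H = ((Fintype.card V : ℤ) - 1) * M1 H - F H := by
  refine Eq.trans (edgeSum_add' Hᶜ (fun v => d H v ^ 2) (by intros; ring)) ?_
  have h2 : ∀ v : V, ((Fintype.card V - 1 - H.degree v : ℕ) : ℤ)
      = (Fintype.card V : ℤ) - 1 - d H v := by
    intro v
    have := H.degree_lt_card_verts v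
    simp only [d]
    omega
  simp only [H.degree_compl, h2]
  unfold M1 F
  rw [Finset.mul_sum, ← Finset.sum_sub_distrib]
  refine Finset.sum_congr rfl fun v _ => by ring

lemma card_edgeSet_eq (G : SimpleGraph V) : (Fintype.card G.edgeSet : ℤ) = m G := by
  rw [m, edgeFinset, Set.toFinset_card]

lemma sub_deg_inl (G : SimpleGraph V) (v : V) :
    (subdivision G).degree (Sum.inl v) = G.degree v := by
  rw [degree, ← card_incidenceFinset_eq_degree (G := G) (v := v)]
  refine Finset.card_nbij'
    (fun x => match x with | Sum.inl _ => s(v, v) | Sum.inr e => (e : Sym2 V))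
    (fun e => if h : e ∈ G.edgeSet then Sum.inr ⟨e, h⟩ else Sum.inl v) ?_ ?_ ?_ ?_
  · rintro (u | e) hx
    · simp only [Finset.mem_coe, mem_neighborFinset] at hx; simp [subdivision] at hx
    · simp only [Finset.mem_coe, mem_neighborFinset] at hx; simp only [subdivision] at hx
      simp [mem_incidenceFinset, incidenceSet, e.2, hx]
  · intro e he
    rw [Finset.mem_coe, mem_incidenceFinset] at he
    simp only [he.1, dif_pos]
    simp only [Finset.mem_coe, mem_neighborFinset]; simp [subdivision, he.2]
  · rintro (u | e) hx
    · simp only [Finset.mem_coe, mem_neighborFinset] at hx; simp [subdivision] at hx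
    · simp [e.2]
  · intro e he
    rw [Finset.mem_coe, mem_incidenceFinset] at he
    simp [he.1]

lemma sub_deg_inr (G : SimpleGraph V) (e : G.edgeSet) :
    (subdivision G).degree (Sum.inr e) = 2 := by
  obtain ⟨e, he⟩ := e
  induction e with
  | _ a b =>
    have hab : a ≠ b := G.ne_of_adj ((mem_edgeSet G).mp he)
    rw [degree]
    have hnb : (subdivision G).neighborFinset (Sum.inr ⟨s(a, b), he⟩)
        = {Sum.inl a, Sum.inl b} := by
      ext x
      rcases x with u | f <;> simp only [mem_neighborFinset] <;> simp [subdivision, Sym2.mem_iff]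
    rw [hnb, Finset.card_pair (by simp [hab])]

theorem stmt11 {V : Type*} [Fintype V] (G : SimpleGraph V) :
    Fbar (subdivision G) =
      (m G + (Fintype.card V : ℤ) - 1) * M1 G - F G +
        4 * m G * (m G + (Fintype.card V : ℤ) - 3) := by

  rw [Fbar_eq]
  have hcard : (Fintype.card (V ⊕ G.edgeSet) : ℤ) = (Fintype.card V : ℤ) + m G := by
    rw [Fintype.card_sum]; push_cast [card_edgeSet_eq]; ring
  have hM1 : M1 (subdivision G) = M1 G + 4 * m G := by
    unfold M1 d
    rw [Fintype.sum_sum_type]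
    simp only [sub_deg_inl, sub_deg_inr]
    rw [Finset.sum_const, Finset.card_univ]
    rw [show ((Fintype.card G.edgeSet : ℕ) • ((2 : ℕ) : ℤ) ^ 2)
        = (Fintype.card G.edgeSet : ℤ) * 4 from by push_cast; ring, card_edgeSet_eq]
    ring
  have hF : F (subdivision G) = F G + 8 * m G := by
    unfold F d
    rw [Fintype.sum_sum_type]
    simp only [sub_deg_inl, sub_deg_inr]
    rw [Finset.sum_const, Finset.card_univ]
    rw [show ((Fintype.card G.edgeSet : ℕ) • ((2 : ℕ) : ℤ) ^ 3)
        = (Fintype.card G.edgeSet : ℤ) * 8 from by push_cast; ring, card_edgeSet_eq]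
    ring
  rw [hcard, hM1, hF]
  ring

end Paper
end
end

section
/- Let G be a finite simple graph with n vertices and m edges. The F-coindex of the line graph satisfies F̄(L(G)) = (m+5)·F(G) - 4(m+2)·M₁(G) + 2(m+5)·M₂(G) - ξ₄(G) - 3·ReZG₃(G) + 4m(m+1). -/
open SimpleGraph Finset
open scoped Classical

noncomputable section
namespace Paper

variable {V : Type*} [Fintype V]

lemma degree_inst (H : SimpleGraph V) (v : V) (i j : Fintype (H.neighborSet v)) :
    (@SimpleGraph.degree _ H v i) = (@SimpleGraph.degree _ H v j) := by
  unfold SimpleGraph.degree SimpleGraph.neighborFinset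
  exact congrArg Finset.card (@Set.toFinset_congr _ _ _ i j rfl)

lemma d_eq (H : SimpleGraph V) (v : V) (i : Fintype (H.neighborSet v)) :
    ((@SimpleGraph.degree _ H v i : ℕ) : ℤ) = d H v := by
  rw [Paper.d]
  norm_cast
  exact degree_inst H v i _

lemma sum_dart_edge (H : SimpleGraph V) (F : Sym2 V → ℤ) :
    ∑ d : H.Dart, F d.edge = 2 * ∑ e ∈ H.edgeFinset, F e := by
  classical
  rw [← Finset.sum_fiberwise_of_maps_to (g := SimpleGraph.Dart.edge) (t := H.edgeFinset)
      (fun d _ => by simp) (fun d => F d.edge), Finset.mul_sum]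
  refine Finset.sum_congr rfl fun e he => ?_
  rw [Finset.sum_congr rfl (fun d hd => by rw [(Finset.mem_filter.1 hd).2]),
    Finset.sum_const, H.dart_edge_fiber_card e (by rwa [← mem_edgeFinset])]
  simp [two_mul]

lemma sum_dart_fst (H : SimpleGraph V) (g : V → ℤ) :
    ∑ d : H.Dart, g d.fst = ∑ v, d H v * g v := by
  classical
  rw [← Finset.sum_fiberwise_of_maps_to (g := fun d : H.Dart => d.fst) (t := Finset.univ)
      (fun d _ => Finset.mem_univ _) (fun d => g d.fst)]
  refine Finset.sum_congr rfl fun v _ => ?_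
  rw [Finset.sum_congr rfl (fun d hd => by rw [(Finset.mem_filter.1 hd).2]),
    Finset.sum_const]
  rw [show ({d : H.Dart | d.fst = v} : Finset _).card = H.degree v from
    H.dart_fst_fiber_card_eq_degree v]
  rw [nsmul_eq_mul, d_eq, mul_comm]

lemma sum_dart_snd (H : SimpleGraph V) (g : V → ℤ) :
    ∑ d : H.Dart, g d.snd = ∑ d : H.Dart, g d.fst :=
  Fintype.sum_bijective SimpleGraph.Dart.symm (Dart.symm_involutive.bijective)
    _ _ (fun d => by simp)

lemma pairSum (H : SimpleGraph V) (g : V → ℤ) (hf : ∀ u v, g u + g v = g v + g u) :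
    ∑ e ∈ H.edgeFinset, Sym2.lift ⟨fun u v => g u + g v, hf⟩ e
      = ∑ v, d H v * g v := by
  classical
  have h := sum_dart_edge H (Sym2.lift ⟨fun u v => g u + g v, hf⟩)
  have h2 : ∑ d : H.Dart, Sym2.lift ⟨fun u v => g u + g v, hf⟩ d.edge
      = 2 * ∑ v, d H v * g v := by
    have hpt : ∀ d : H.Dart, Sym2.lift ⟨fun u v => g u + g v, hf⟩ d.edge
        = g d.fst + g d.snd := fun d => rfl
    rw [Finset.sum_congr rfl (fun d _ => hpt d), Finset.sum_add_distrib,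
      sum_dart_snd, sum_dart_fst, two_mul]
  exact mul_left_cancel₀ two_ne_zero (h.symm.trans h2)

lemma pairSum' (H : SimpleGraph V) (f : V → V → ℤ) (hf : ∀ u v, f u v = f v u)
    (g : V → ℤ) (hfg : ∀ u v, f u v = g u + g v) :
    edgeSum H f hf = ∑ v, d H v * g v := by
  rw [edgeSum, ← pairSum H g (fun u v => by rw [← hfg, ← hfg, hf])]
  refine Finset.sum_congr rfl fun e _ => ?_
  induction e using Sym2.ind with
  | _ a b => simp only [Sym2.lift_mk, hfg]

lemma lineGraph_degree_add_two (G : SimpleGraph V) (u v : V) (h : G.Adj u v) :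
    G.lineGraph.degree ⟨s(u,v), h⟩ + 2 = G.degree u + G.degree v := by
  classical
  set e : G.edgeSet := ⟨s(u,v), h⟩ with he
  have key : (G.lineGraph.neighborFinset e).image (Subtype.val)
      = (G.incidenceFinset u ∪ G.incidenceFinset v).erase (s(u,v)) := by
    ext x
    simp only [Finset.mem_image, SimpleGraph.mem_neighborFinset,
      SimpleGraph.lineGraph_adj_iff_exists, Finset.mem_erase, Finset.mem_union,
      SimpleGraph.mem_incidenceFinset]
    constructor
    · rintro ⟨f, ⟨hne, w, hw1, hw2⟩, rfl⟩
      have hwe : w = u ∨ w = v := by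
        simpa [he, Sym2.mem_iff] using hw1
      refine ⟨fun hx => hne ?_, ?_⟩
      · exact Subtype.ext (by simp [he, hx])
      · rcases hwe with rfl | rfl
        · exact Or.inl ⟨f.2, hw2⟩
        · exact Or.inr ⟨f.2, hw2⟩
    · rintro ⟨hxe, hx⟩
      have hxE : x ∈ G.edgeSet := by rcases hx with ⟨h1, _⟩ | ⟨h1, _⟩ <;> exact h1
      refine ⟨⟨x, hxE⟩, ⟨?_, ?_⟩, rfl⟩
      · intro hc
        apply hxe
        have hc2 := congrArg Subtype.val hc
        simp only [he] at hc2
        exact hc2.symm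
      · rcases hx with ⟨_, h2⟩ | ⟨_, h2⟩
        · exact ⟨u, by simp [he], h2⟩
        · exact ⟨v, by simp [he], h2⟩
  have hdeg : G.lineGraph.degree e
      = ((G.incidenceFinset u ∪ G.incidenceFinset v).erase (s(u,v))).card := by
    rw [SimpleGraph.degree, ← key, Finset.card_image_of_injective _ Subtype.val_injective]
  have hmem : s(u,v) ∈ G.incidenceFinset u ∪ G.incidenceFinset v := by
    simp [SimpleGraph.mem_incidenceFinset, SimpleGraph.mk'_mem_incidenceSet_left_iff, h]
  have herase := Finset.card_erase_add_one hmem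
  have hinter : G.incidenceFinset u ∩ G.incidenceFinset v = {s(u,v)} := by
    rw [SimpleGraph.incidenceFinset, SimpleGraph.incidenceFinset, ← Set.toFinset_inter]
    ext x
    rw [Set.mem_toFinset, G.incidenceSet_inter_incidenceSet_of_adj h]
    simp
  have hunion := Finset.card_union_add_card_inter (G.incidenceFinset u) (G.incidenceFinset v)
  rw [hinter, Finset.card_singleton, G.card_incidenceFinset_eq_degree,
    G.card_incidenceFinset_eq_degree] at hunion
  omega

lemma d_lineGraph (G : SimpleGraph V) (e : G.edgeSet) :
    d G.lineGraph e
      = Sym2.lift ⟨fun u v => d G u + d G v, fun _ _ => add_comm _ _⟩ e.val - 2 := by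
  obtain ⟨e, he⟩ := e
  revert he
  induction e using Sym2.ind with
  | _ u v =>
    intro he
    have h : G.Adj u v := G.mem_edgeSet.1 he
    have h2 := lineGraph_degree_add_two G u v h
    have h3 := congrArg (Nat.cast (R := ℤ)) h2
    push_cast at h3
    simp only [d, Sym2.lift_mk]
    have hEq : G.lineGraph.degree (⟨s(u,v), he⟩ : G.edgeSet)
        = G.lineGraph.degree (⟨s(u,v), h⟩ : G.edgeSet) := rfl
    rw [hEq]
    linarith

lemma sum_edgeSet (G : SimpleGraph V) (g : Sym2 V → ℤ) :
    ∑ e : G.edgeSet, g e.val = ∑ e ∈ G.edgeFinset, g e := by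
  rw [SimpleGraph.edgeFinset]
  exact (Finset.sum_set_coe (s := G.edgeSet) (f := g))

set_option maxHeartbeats 1000000 in
theorem stmt16 {V : Type*} [Fintype V] (G : SimpleGraph V) :
    Fbar G.lineGraph =
      (m G + 5) * F G - 4 * (m G + 2) * M1 G + 2 * (m G + 5) * M2 G -
        xi4 G - 3 * ReZG3 G + 4 * m G * (m G + 1) := by
  classical
  set L := G.lineGraph with hL
  set Nc := Fintype.card G.edgeSet with hNc
  -- abbreviations for lifted symmetric functions on G
  set Φ : Sym2 V → ℤ := Sym2.lift ⟨fun u v => d G u + d G v, fun _ _ => add_comm _ _⟩ with hΦ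
  -- basic edge-sum evaluations
  have hS1 : ∑ e ∈ G.edgeFinset, Φ e = M1 G := by
    rw [hΦ, pairSum G (d G) (fun _ _ => add_comm _ _)]
    exact Finset.sum_congr rfl fun v _ => by ring
  have hS2 : ∑ e ∈ G.edgeFinset,
      Sym2.lift ⟨fun u v => d G u ^ 2 + d G v ^ 2, fun _ _ => add_comm _ _⟩ e = F G := by
    rw [pairSum G (fun v => d G v ^ 2) (fun _ _ => add_comm _ _)]
    exact Finset.sum_congr rfl fun v _ => by ring
  have hS3 : ∑ e ∈ G.edgeFinset,
      Sym2.lift ⟨fun u v => d G u ^ 3 + d G v ^ 3, fun _ _ => add_comm _ _⟩ e = xi4 G := by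
    rw [pairSum G (fun v => d G v ^ 3) (fun _ _ => add_comm _ _)]
    exact Finset.sum_congr rfl fun v _ => by ring
  have hSM : ∑ e ∈ G.edgeFinset,
      Sym2.lift ⟨fun u v => d G u * d G v, fun u v => mul_comm _ _⟩ e = M2 G := rfl
  have hSR : ∑ e ∈ G.edgeFinset,
      Sym2.lift ⟨fun u v => d G u * d G v * (d G u + d G v),
        fun u v => by ring⟩ e = ReZG3 G := rfl
  have hm : ∑ _e ∈ G.edgeFinset, (1 : ℤ) = m G := by
    simp [m]
  -- sums of powers of line-graph degrees
  have hPow : ∀ k : ℕ, ∑ e : G.edgeSet, d L e ^ k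
      = ∑ e ∈ G.edgeFinset, (Φ e - 2) ^ k := by
    intro k
    rw [← sum_edgeSet G (fun x => (Φ x - 2) ^ k)]
    exact Finset.sum_congr rfl fun e _ => by rw [hL, d_lineGraph, hΦ]
  have hSL2 : ∑ e : G.edgeSet, d L e ^ 2
      = F G + 2 * M2 G - 4 * M1 G + 4 * m G := by
    rw [hPow 2, ← hS1, ← hS2, ← hSM, ← hm]
    rw [Finset.sum_congr rfl (fun e _ => show (Φ e - 2) ^ 2
        = (Sym2.lift ⟨fun u v => d G u ^ 2 + d G v ^ 2, fun _ _ => add_comm _ _⟩ e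
            + 2 * Sym2.lift ⟨fun u v => d G u * d G v, fun u v => mul_comm _ _⟩ e
            - 4 * Φ e + 4 * 1) by
        induction e using Sym2.ind with
        | _ u v => simp only [hΦ, Sym2.lift_mk]; ring)]
    rw [Finset.sum_add_distrib, Finset.sum_sub_distrib, Finset.sum_add_distrib,
      ← Finset.mul_sum, ← Finset.mul_sum, ← Finset.mul_sum]
  have hSL3 : ∑ e : G.edgeSet, d L e ^ 3
      = xi4 G + 3 * ReZG3 G - 6 * F G - 12 * M2 G + 12 * M1 G - 8 * m G := by
    rw [hPow 3, ← hS1, ← hS2, ← hS3, ← hSM, ← hSR, ← hm]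
    rw [Finset.sum_congr rfl (fun e _ => show (Φ e - 2) ^ 3
        = (Sym2.lift ⟨fun u v => d G u ^ 3 + d G v ^ 3, fun _ _ => add_comm _ _⟩ e
            + 3 * Sym2.lift ⟨fun u v => d G u * d G v * (d G u + d G v), fun u v => by ring⟩ e
            - 6 * Sym2.lift ⟨fun u v => d G u ^ 2 + d G v ^ 2, fun _ _ => add_comm _ _⟩ e
            - 12 * Sym2.lift ⟨fun u v => d G u * d G v, fun u v => mul_comm _ _⟩ e
            + 12 * Φ e - 8 * 1) by
        induction e using Sym2.ind with
        | _ u v => simp only [hΦ, Sym2.lift_mk]; ring)]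
    rw [Finset.sum_sub_distrib, Finset.sum_add_distrib, Finset.sum_sub_distrib,
      Finset.sum_sub_distrib, Finset.sum_add_distrib,
      ← Finset.mul_sum, ← Finset.mul_sum, ← Finset.mul_sum, ← Finset.mul_sum,
      ← Finset.mul_sum]
  -- complement degree identity
  have hcompl : ∀ e : G.edgeSet, d Lᶜ e = (Nc : ℤ) - 1 - d L e := by
    intro e
    have h1 : L.degree e < Nc := L.degree_lt_card_verts e
    have h2 := SimpleGraph.degree_compl L e
    have h3 : (Lᶜ).degree e + L.degree e + 1 = Nc := by omega
    have h4 := congrArg (Nat.cast (R := ℤ)) h3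
    push_cast at h4
    rw [d_eq, d_eq] at h4
    linarith
  -- F-coindex of the line graph via complement degrees
  have hFbar : Fbar L = ∑ e : G.edgeSet, d Lᶜ e * d L e ^ 2 := by
    rw [Fbar]
    exact pairSum' Lᶜ _ _ (fun a => d L a ^ 2) (fun u v => rfl)
  have hFbar2 : Fbar L = ((Nc : ℤ) - 1) * (∑ e : G.edgeSet, d L e ^ 2)
      - ∑ e : G.edgeSet, d L e ^ 3 := by
    rw [hFbar, Finset.sum_congr rfl (fun e _ => show d Lᶜ e * d L e ^ 2
        = ((Nc : ℤ) - 1) * d L e ^ 2 - d L e ^ 3 by rw [hcompl e]; ring)]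
    rw [Finset.sum_sub_distrib, ← Finset.mul_sum]
  have hN : (Nc : ℤ) = m G := by
    simp only [hNc, m, SimpleGraph.edgeFinset, Set.toFinset_card]
  rw [hFbar2, hSL2, hSL3, hN]
  ring


end Paper
end
end
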